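/- For each q ∈ (0,1) and each multi-index k ∈ ℤ₊ⁿ, one has (q;q)_∞ⁿ ≤ [k]_q!/[|k|]_q! ≤ 1, where (q;q)_∞ = ∏_{j=1}^∞ (1 - q^j). -/

import Mathlib

open Finset

/-- `[m]_q = 1 + q + ⋯ + q^(m-1)`. -/
noncomputable def qNum (s : ℝ) (m : ℕ) : ℝ := ∑ i ∈ Finset.range m, s ^ i

/-- `[m]_q! = [1]_q ⋯ [m]_q`, with `[0]_q! = 1`. -/
noncomputable def qFact (s : ℝ) (m : ℕ) : ℝ := ∏ i ∈ Finset.range m, qNum s (i + 1)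

/-- `[k]_q! = [k₁]_q! ⋯ [kₙ]_q!` for a multi-index `k`. -/
noncomputable def qFactM {n : ℕ} (s : ℝ) (k : Fin n → ℕ) : ℝ := ∏ i, qFact s (k i)

/-- Partial product `∏_{j<m} (1 - q^(j+1))`. -/
noncomputable def qPoch (q : ℝ) (m : ℕ) : ℝ := ∏ j ∈ Finset.range m, (1 - q ^ (j + 1))

lemma factor_pos {q : ℝ} (hq0 : 0 < q) (hq1 : q < 1) (j : ℕ) : 0 < 1 - q ^ (j + 1) := by
  have : q ^ (j + 1) < 1 := pow_lt_one₀ hq0.le hq1 (Nat.succ_ne_zero j)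
  linarith

lemma factor_le_one {q : ℝ} (hq0 : 0 < q) (j : ℕ) : 1 - q ^ (j + 1) ≤ 1 := by
  have : 0 < q ^ (j + 1) := pow_pos hq0 _
  linarith

lemma qPoch_pos {q : ℝ} (hq0 : 0 < q) (hq1 : q < 1) (m : ℕ) : 0 < qPoch q m :=
  Finset.prod_pos fun j _ => factor_pos hq0 hq1 j

lemma qPoch_le_one {q : ℝ} (hq0 : 0 < q) (hq1 : q < 1) (m : ℕ) : qPoch q m ≤ 1 := by
  apply Finset.prod_le_one
  · exact fun j _ => (factor_pos hq0 hq1 j).le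
  · exact fun j _ => factor_le_one hq0 j

lemma qPoch_anti {q : ℝ} (hq0 : 0 < q) (hq1 : q < 1) : Antitone (qPoch q) := by
  apply antitone_nat_of_succ_le
  intro m
  rw [qPoch, Finset.prod_range_succ]
  exact mul_le_of_le_one_right (qPoch_pos hq0 hq1 m).le (factor_le_one hq0 m)

lemma qNum_eq {q : ℝ} (hq1 : q < 1) (m : ℕ) : qNum q m = (1 - q ^ m) / (1 - q) := by
  rw [qNum, geom_sum_eq (ne_of_lt hq1)]
  rw [div_eq_div_iff (by linarith) (by linarith)]
  ring

lemma qFact_eq {q : ℝ} (hq1 : q < 1) (m : ℕ) : qFact q m = qPoch q m / (1 - q) ^ m := by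
  rw [qFact, qPoch, Finset.prod_congr rfl (fun i _ => qNum_eq hq1 (i + 1)),
    Finset.prod_div_distrib, Finset.prod_const, Finset.card_range]

lemma qPoch_mul_le {q : ℝ} (hq0 : 0 < q) (hq1 : q < 1) (a b : ℕ) :
    qPoch q a * qPoch q b ≤ qPoch q (a + b) := by
  rw [qPoch, qPoch, qPoch, Finset.prod_range_add]
  apply mul_le_mul_of_nonneg_left _ (qPoch_pos hq0 hq1 a).le
  apply Finset.prod_le_prod
  · exact fun j _ => (factor_pos hq0 hq1 j).le
  · intro j _
    have : q ^ (a + j + 1) ≤ q ^ (j + 1) :=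
      pow_le_pow_of_le_one hq0.le hq1.le (by omega)
    linarith

lemma qPoch_prod_le {q : ℝ} (hq0 : 0 < q) (hq1 : q < 1) {ι : Type*} (s : Finset ι)
    (k : ι → ℕ) : ∏ i ∈ s, qPoch q (k i) ≤ qPoch q (∑ i ∈ s, k i) := by
  classical
  induction s using Finset.induction_on with
  | empty => simp [qPoch]
  | @insert a s ha ih =>
    rw [Finset.prod_insert ha, Finset.sum_insert ha]
    calc qPoch q (k a) * ∏ i ∈ s, qPoch q (k i)
        ≤ qPoch q (k a) * qPoch q (∑ i ∈ s, k i) :=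
          mul_le_mul_of_nonneg_left ih (qPoch_pos hq0 hq1 _).le
      _ ≤ qPoch q (k a + ∑ i ∈ s, k i) := qPoch_mul_le hq0 hq1 _ _

lemma Real.summable_cexp_multipliable {ι α : Type*} (f : ι → α → ℝ)
    (hfn : ∀ x n, 0 < f n x) (hf : ∀ x, Summable fun n => Real.log (f n x)) :
    ∀ x, Multipliable fun n => f n x :=
  fun x => Real.multipliable_of_summable_log (hfn x) (hf x)

lemma multipliable_qPoch {q : ℝ} (hq0 : 0 < q) (hq1 : q < 1) :
    Multipliable (fun j : ℕ => 1 - q ^ (j + 1)) := by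
  have := Real.summable_cexp_multipliable (fun j (_ : Unit) => 1 - q ^ (j + 1))
    (fun _ j => factor_pos hq0 hq1 j) ?_ ()
  · exact this
  intro _
  apply Summable.of_norm_bounded (g := fun j => q ^ (j + 1) / (1 - q))
  · exact (((summable_geometric_of_lt_one hq0.le hq1).mul_left q).congr
      (fun j => (pow_succ' q j).symm)).div_const _
  · intro j
    have hpos := factor_pos hq0 hq1 j
    have hlog : Real.log (1 - q ^ (j + 1)) ≤ 0 := by
      apply Real.log_nonpos (by linarith) (factor_le_one hq0 j)
    rw [Real.norm_eq_abs, abs_of_nonpos hlog]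
    have h2 : Real.log (1 - q ^ (j + 1))⁻¹ ≤ (1 - q ^ (j + 1))⁻¹ - 1 :=
      Real.log_le_sub_one_of_pos (by positivity)
    rw [Real.log_inv] at h2
    have h3 : (1 - q ^ (j + 1))⁻¹ - 1 = q ^ (j + 1) / (1 - q ^ (j + 1)) := by
      field_simp
      ring
    rw [h3] at h2
    have h4 : -Real.log (1 - q ^ (j + 1)) ≤ q ^ (j + 1) / (1 - q ^ (j + 1)) := by
      linarith
    refine h4.trans ?_
    have h5 : q ^ (j + 1) ≤ q := by
      calc q ^ (j + 1) ≤ q ^ 1 := pow_le_pow_of_le_one hq0.le hq1.le (by omega)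
        _ = q := pow_one q
    gcongr

lemma tprod_le_qPoch {q : ℝ} (hq0 : 0 < q) (hq1 : q < 1) (m : ℕ) :
    (∏' j : ℕ, (1 - q ^ (j + 1))) ≤ qPoch q m := by
  have hM := multipliable_qPoch hq0 hq1
  refine le_of_tendsto hM.hasProd.tendsto_prod_nat ?_
  filter_upwards [Filter.eventually_ge_atTop m] with N hN
  exact qPoch_anti hq0 hq1 hN

lemma tprod_nonneg' {q : ℝ} (hq0 : 0 < q) (hq1 : q < 1) :
    0 ≤ (∏' j : ℕ, (1 - q ^ (j + 1))) := by
  have hM := multipliable_qPoch hq0 hq1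
  refine ge_of_tendsto hM.hasProd.tendsto_prod_nat ?_
  filter_upwards with N
  exact (qPoch_pos hq0 hq1 N).le

/-- For `q ∈ (0,1)` and `k ∈ ℤ₊ⁿ`: `(q;q)_∞ⁿ ≤ [k]_q!/[|k|]_q! ≤ 1`, where
`(q;q)_∞ = ∏_{j≥1} (1 - qʲ)`. -/
theorem stmt2 {n : ℕ} (q : ℝ) (hq0 : 0 < q) (hq1 : q < 1) (k : Fin n → ℕ) :
    (∏' j : ℕ, (1 - q ^ (j + 1))) ^ n ≤ qFactM q k / qFact q (∑ i, k i) ∧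
      qFactM q k / qFact q (∑ i, k i) ≤ 1 := by
  have h1q : (0:ℝ) < 1 - q := by linarith
  have key : qFactM q k / qFact q (∑ i, k i)
      = (∏ i, qPoch q (k i)) / qPoch q (∑ i, k i) := by
    rw [qFactM, qFact_eq hq1, Finset.prod_congr rfl (fun i _ => qFact_eq hq1 (k i)),
      Finset.prod_div_distrib, Finset.prod_pow_eq_pow_sum]
    rw [div_div_div_comm, div_self (by positivity : ((1:ℝ)-q) ^ (∑ i, k i) ≠ 0), div_one]
  rw [key]
  have hS := qPoch_pos hq0 hq1 (∑ i, k i)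
  constructor
  · calc (∏' j : ℕ, (1 - q ^ (j + 1))) ^ n
        = ∏ _i : Fin n, (∏' j : ℕ, (1 - q ^ (j + 1))) := by
          rw [Finset.prod_const, Finset.card_univ, Fintype.card_fin]
      _ ≤ ∏ i, qPoch q (k i) :=
          Finset.prod_le_prod (fun _ _ => tprod_nonneg' hq0 hq1)
            (fun i _ => tprod_le_qPoch hq0 hq1 (k i))
      _ ≤ (∏ i, qPoch q (k i)) / qPoch q (∑ i, k i) := by
          rw [le_div_iff₀ hS]
          exact mul_le_of_le_one_right
            (Finset.prod_nonneg fun i _ => (qPoch_pos hq0 hq1 _).le)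
            (qPoch_le_one hq0 hq1 _)
  · rw [div_le_one hS]
    exact qPoch_prod_le hq0 hq1 Finset.univ k
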